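/- If a finite simple graph G contains no odd cycle, then G is not link-irregular. -/

import Mathlib

open SimpleGraph Finset

/-- The link of a vertex `v`: the subgraph induced by the neighborhood of `v`. -/
def SimpleGraph.link {V : Type*} (G : SimpleGraph V) (v : V) :
    SimpleGraph (G.neighborSet v) :=
  G.induce (G.neighborSet v)

/-- A graph is link-irregular if the links of any two distinct vertices are
non-isomorphic. -/
def SimpleGraph.LinkIrregular {V : Type*} (G : SimpleGraph V) : Prop :=
  ∀ u v : V, u ≠ v → ¬ Nonempty (G.link u ≃g G.link v)

lemma triangle_free_of_no_odd_cycle {V : Type*} (G : SimpleGraph V)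
    (hodd : ∀ (v : V) (c : G.Walk v v), c.IsCycle → ¬ Odd c.length)
    {a b c : V} (hab : G.Adj a b) (hbc : G.Adj b c) (hca : G.Adj c a) : False := by
  have hac : a ≠ c := fun h => (h ▸ hca).ne rfl
  have w : G.Walk a a := Walk.cons hab (Walk.cons hbc (Walk.cons hca Walk.nil))
  refine hodd a (Walk.cons hab (Walk.cons hbc (Walk.cons hca Walk.nil))) ?_ ⟨1, rfl⟩
  constructor
  · constructor
    · simp [Walk.isTrail_def, Sym2.eq, Sym2.rel_iff', hab.ne, hbc.ne, hca.ne, hac,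
        hac.symm, hab.ne', hbc.ne', hca.ne']
    · simp
  · simp [hbc.ne, hca.ne', hac.symm, hab.ne']

/-- A finite simple graph with no odd cycle is not link-irregular. -/
theorem no_odd_cycle_not_linkIrregular {V : Type*} [Fintype V] (G : SimpleGraph V)
    (hodd : ∀ (v : V) (c : G.Walk v v), c.IsCycle → ¬ Odd c.length)
    (hn : 2 ≤ Fintype.card V) : ¬ G.LinkIrregular := by
  classical
  intro hli
  -- links are edgeless
  have hlink : ∀ (v : V) (a b : G.neighborSet v), ¬ (G.link v).Adj a b := by
    rintro v a b hadj
    exact triangle_free_of_no_odd_cycle G hodd (hadj : G.Adj a b) (G.adj_symm b.2) a.2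
  -- equal degrees give isomorphic links
  have hdeg : Function.Injective (fun v => G.degree v) := by
    intro u v huv
    by_contra hne
    refine hli u v hne ⟨?_⟩
    have hcard : Fintype.card (G.neighborSet u) = Fintype.card (G.neighborSet v) := by
      simpa [G.card_neighborSet_eq_degree] using huv
    exact ⟨Fintype.equivOfCardEq hcard, by
      intro a b
      simp only [iff_iff_implies_and_implies]
      constructor
      · intro h; exact absurd h (hlink v _ _)
      · intro h; exact absurd h (hlink u _ _)⟩
  -- pigeonhole on degrees
  set n := Fintype.card V with hnn
  have hlt : ∀ v : V, G.degree v < n := fun v => G.degree_lt_card_verts v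
  have hsurj : Function.Surjective (fun v => (⟨G.degree v, hlt v⟩ : Fin n)) := by
    have hinj : Function.Injective (fun v => (⟨G.degree v, hlt v⟩ : Fin n)) := by
      intro u v h
      exact hdeg (by simpa using congrArg Fin.val h)
    exact ((Fintype.bijective_iff_injective_and_card _).2 ⟨hinj, by simp [hnn]⟩).2
  obtain ⟨u, hu⟩ := hsurj ⟨n - 1, by omega⟩
  obtain ⟨w, hw⟩ := hsurj ⟨0, by omega⟩
  have hu' : G.degree u = n - 1 := congrArg Fin.val hu
  have hw' : G.degree w = 0 := congrArg Fin.val hw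
  have huw : u ≠ w := by intro h; rw [h, hw'] at hu'; omega
  -- u is adjacent to everything else, in particular to w
  have : G.neighborFinset u = Finset.univ.erase u := by
    apply Finset.eq_of_subset_of_card_le
    · intro x hx
      simp only [mem_neighborFinset] at hx
      exact Finset.mem_erase.2 ⟨hx.ne', Finset.mem_univ x⟩
    · rw [Finset.card_erase_of_mem (Finset.mem_univ u), Finset.card_univ,
        ← G.card_neighborFinset_eq_degree] at *
      omega
  have hadj : G.Adj u w := by
    rw [← mem_neighborFinset, this]
    exact Finset.mem_erase.2 ⟨huw.symm, Finset.mem_univ w⟩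
  have : w ∈ G.neighborFinset w ∨ G.degree w ≠ 0 := by
    right
    rw [← G.card_neighborFinset_eq_degree]
    refine Finset.card_ne_zero_of_mem (a := u) ?_
    rw [mem_neighborFinset]; exact hadj.symm
  rcases this with h | h
  · simp at h
  · exact h hw'
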